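/- Let β > 3 and let x_s ∈ (0,1/3) satisfy ξ(x_s) = β. Consider F_{β,0} (the free energy with J = 0) on D. Then the set of global minimizers of F_{β,0} on D consists of exactly the nine points (a₁,a₂,b₁,b₂) where (a₁,a₂) and (b₁,b₂) each range over the three pairs (x_s, x_s), (x_s, 1−2x_s), (1−2x_s, x_s); moreover, (1/3, 1/3, 1/3, 1/3) is a local maximum of F_{β,0}. -/

import Mathlib

open Real Set

/-- ξ(x) = (1/(1−3x)) log((1−2x)/x), continuously extended by ξ(1/3) = 3. -/
noncomputable def xi (x : ℝ) : ℝ :=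
  if x = 1 / 3 then 3 else (1 / (1 - 3 * x)) * Real.log ((1 - 2 * x) / x)

/-- The three-spin (q = 3) two-component Curie–Weiss–Potts free energy on coordinates
(x₁, x₂, y₁, y₂), with x₃ = 1 − x₁ − x₂ and y₃ = 1 − y₁ − y₂. -/
noncomputable def F3 (β J : ℝ) (x : Fin 4 → ℝ) : ℝ :=
  -(1 / 2) * ((x 0) ^ 2 + (x 1) ^ 2 + (1 - x 0 - x 1) ^ 2
      + (x 2) ^ 2 + (x 3) ^ 2 + (1 - x 2 - x 3) ^ 2)
    - J * (x 0 * x 2 + x 1 * x 3 + (1 - x 0 - x 1) * (1 - x 2 - x 3))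
    + ((1 + J) / β) * (x 0 * Real.log (x 0) + x 1 * Real.log (x 1)
        + (1 - x 0 - x 1) * Real.log (1 - x 0 - x 1)
        + x 2 * Real.log (x 2) + x 3 * Real.log (x 3)
        + (1 - x 2 - x 3) * Real.log (1 - x 2 - x 3))

/-- The open domain D: product of two open 2-simplices. -/
def D3 : Set (Fin 4 → ℝ) :=
  {x | 0 < x 0 ∧ 0 < x 1 ∧ 0 < x 2 ∧ 0 < x 3 ∧ x 0 + x 1 < 1 ∧ x 2 + x 3 < 1}

noncomputable def hfun (T t : ℝ) : ℝ := -(t^2)/2 + T * (t * Real.log t)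
noncomputable def hd (T t : ℝ) : ℝ := -t + T * Real.log t + T

lemma hfun_hasDerivAt {T t : ℝ} (ht : t ≠ 0) : HasDerivAt (hfun T) (hd T t) t := by
  have h1 : HasDerivAt (fun s : ℝ => -(s^2)/2) (-(2*t^1)/2) t :=
    ((hasDerivAt_pow 2 t).neg.div_const 2)
  have h2 := (Real.hasDerivAt_mul_log ht).const_mul T
  have h3 := h1.add h2
  have : -(2*t^1)/2 + T * (Real.log t + 1) = hd T t := by
    simp [hd]; ring
  rw [this] at h3
  exact h3

lemma hd_hasDerivAt {T t : ℝ} (ht : t ≠ 0) : HasDerivAt (hd T) (-1 + T/t) t := by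
  have h1 : HasDerivAt (fun s : ℝ => -s) (-1 : ℝ) t := (hasDerivAt_id t).neg
  have h2 := (Real.hasDerivAt_log ht).const_mul T
  have h3 := (h1.add h2).add_const T
  have : -1 + T * (1/t) = -1 + T/t := by ring
  exact h3.congr_deriv (by ring)

lemma hfun_continuous (T : ℝ) : Continuous (hfun T) := by
  have : Continuous fun t : ℝ => -(t^2)/2 := by continuity
  exact this.add (continuous_const.mul Real.continuous_mul_log)

lemma hd_strictMonoOn {T : ℝ} (hT : 0 < T) : StrictMonoOn (hd T) (Ioc 0 T) := by
  apply strictMonoOn_of_deriv_pos (convex_Ioc 0 T)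
  · intro x hx; exact (hd_hasDerivAt (ne_of_gt hx.1)).continuousAt.continuousWithinAt
  · intro x hx
    rw [interior_Ioc] at hx
    rw [(hd_hasDerivAt (ne_of_gt hx.1)).deriv]
    have : 1 < T / x := (one_lt_div hx.1).2 hx.2
    linarith

lemma hd_strictAntiOn {T : ℝ} (hT : 0 < T) : StrictAntiOn (hd T) (Ici T) := by
  apply strictAntiOn_of_deriv_neg (convex_Ici T)
  · intro x hx; exact (hd_hasDerivAt (ne_of_gt (lt_of_lt_of_le hT hx))).continuousAt.continuousWithinAt
  · intro x hx
    rw [interior_Ici] at hx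
    have hx0 : 0 < x := lt_trans hT hx
    rw [(hd_hasDerivAt (ne_of_gt hx0)).deriv]
    have : T / x < 1 := (div_lt_one hx0).2 hx
    linarith

lemma hfun_strictConcaveOn {T : ℝ} (hT : 0 < T) : StrictConcaveOn ℝ (Ici T) (hfun T) := by
  apply strictConcaveOn_of_deriv2_neg (convex_Ici T) ((hfun_continuous T).continuousOn)
  intro x hx
  rw [interior_Ici] at hx
  have hx0 : 0 < x := lt_trans hT hx
  have hev : deriv (hfun T) =ᶠ[nhds x] hd T := by
    filter_upwards [eventually_gt_nhds hx0] with y hy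
    exact (hfun_hasDerivAt (ne_of_gt hy)).deriv
  rw [Function.iterate_succ, Function.iterate_one, Function.comp_apply, hev.deriv_eq,
    (hd_hasDerivAt (ne_of_gt hx0)).deriv]
  have : T / x < 1 := (div_lt_one hx0).2 hx
  linarith


noncomputable def wwf (p : ℝ) : ℝ := 3*(1-3*p) - (Real.log (1-2*p) - Real.log p)
noncomputable def Zf (p : ℝ) : ℝ := (1-3*p)/(p*(1-2*p)) - 3*(Real.log (1-2*p) - Real.log p)
noncomputable def Xif (p : ℝ) : ℝ := (Real.log (1-2*p) - Real.log p)/(1-3*p)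

lemma log_one_sub_two_hasDerivAt {p : ℝ} (hp : 1 - 2*p ≠ 0) :
    HasDerivAt (fun p : ℝ => Real.log (1-2*p)) (-2/(1-2*p)) p := by
  have h1 : HasDerivAt (fun p : ℝ => 1-2*p) (-2) p := by
    simpa using ((hasDerivAt_id p).const_mul (2:ℝ)).const_sub 1
  have := (Real.hasDerivAt_log hp).comp p h1
  simpa [div_eq_mul_inv, mul_comm, Function.comp_def] using this

lemma wwf_hasDerivAt {p : ℝ} (hp : 0 < p) (hp2 : 1 - 2*p ≠ 0) :
    HasDerivAt wwf (-9 + (2/(1-2*p) + 1/p)) p := by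
  unfold wwf
  have h1 : HasDerivAt (fun p : ℝ => 3*(1-3*p)) (-9) p := by
    have := (((hasDerivAt_id p).const_mul (3:ℝ)).const_sub 1).const_mul (3:ℝ)
    exact this.congr_deriv (by norm_num)
  have h2 := (log_one_sub_two_hasDerivAt hp2).sub (Real.hasDerivAt_log (ne_of_gt hp))
  have h3 := h1.sub h2
  exact h3.congr_deriv (by ring)

lemma wwf_nonneg {p : ℝ} (hp : p ∈ Ico (1/6 : ℝ) (1/3)) : 0 ≤ wwf p := by
  have key : AntitoneOn wwf (Icc (1/6 : ℝ) (1/3)) := by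
    apply antitoneOn_of_deriv_nonpos (convex_Icc _ _)
    · intro x hx
      have hx0 : 0 < x := lt_of_lt_of_le (by norm_num) hx.1
      have hx2 : (0:ℝ) < 1 - 2*x := by have := hx.2; linarith
      exact (wwf_hasDerivAt hx0 (ne_of_gt hx2)).continuousAt.continuousWithinAt
    · intro x hx
      rw [interior_Icc] at hx
      have hx0 : 0 < x := lt_trans (by norm_num) hx.1
      have hx2 : (0:ℝ) < 1 - 2*x := by have := hx.2; linarith
      exact ((wwf_hasDerivAt hx0 (ne_of_gt hx2)).differentiableAt).differentiableWithinAt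
    · intro x hx
      rw [interior_Icc] at hx
      have hx0 : 0 < x := lt_trans (by norm_num) hx.1
      have hx2 : (0:ℝ) < 1 - 2*x := by have := hx.2; linarith
      rw [(wwf_hasDerivAt hx0 (ne_of_gt hx2)).deriv]
      rw [div_add_div _ _ (ne_of_gt hx2) (ne_of_gt hx0)]
      have hpos : (0:ℝ) < (1-2*x)*x := by positivity
      rw [← sub_nonpos]
      have : -9 + (2*x + (1-2*x)*1)/((1-2*x)*x) - 0 = (1 - 9*((1-2*x)*x))/((1-2*x)*x) := by
        field_simp; ring
      rw [this]
      apply div_nonpos_of_nonpos_of_nonneg _ (le_of_lt hpos)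
      nlinarith [hx.1, hx.2]
  have h13 : wwf (1/3) = 0 := by
    have h : (1:ℝ) - 2*(1/3) = 1/3 := by norm_num
    rw [wwf, h]
    norm_num
  have := key (mem_Icc.2 ⟨hp.1, le_of_lt hp.2⟩) (mem_Icc.2 ⟨by norm_num, le_refl _⟩) (le_of_lt hp.2)
  linarith [h13 ▸ this]

/-- If `log((1-2p)/p) > 3(1-3p)` (i.e. ξ(p) > 3) with p ∈ (0,1/3), then p < 1/6. -/
lemma lt_sixth_of_xi_gt_three {p : ℝ} (hp : p ∈ Ioo (0:ℝ) (1/3))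
    (h : 3*(1-3*p) < Real.log (1-2*p) - Real.log p) : p < 1/6 := by
  by_contra hc
  push_neg at hc
  have := wwf_nonneg (mem_Ico.2 ⟨hc, hp.2⟩)
  rw [wwf] at this; linarith

lemma Zf_hasDerivAt {p : ℝ} (hp : 0 < p) (hp2 : 0 < 1 - 2*p) :
    HasDerivAt Zf ((-3*(p*(1-2*p)) - (1-3*p)*(1-4*p))/(p*(1-2*p))^2 + 3*(2/(1-2*p) + 1/p)) p := by
  have hden : p*(1-2*p) ≠ 0 := by positivity
  have hN : HasDerivAt (fun p : ℝ => 1-3*p) (-3) p := by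
    simpa using ((hasDerivAt_id p).const_mul (3:ℝ)).const_sub 1
  have hD : HasDerivAt (fun p : ℝ => p*(1-2*p)) (1-4*p) p := by
    have := (hasDerivAt_id p).mul (((hasDerivAt_id p).const_mul (2:ℝ)).const_sub 1)
    exact this.congr_deriv (by simp only [id]; ring)
  have hq := hN.div hD hden
  have hlog := (log_one_sub_two_hasDerivAt (ne_of_gt hp2)).sub (Real.hasDerivAt_log (ne_of_gt hp))
  have h3 := hq.sub (hlog.const_mul 3)
  exact h3.congr_deriv (by ring)

lemma Zf_pos {p : ℝ} (hp : p ∈ Ioo (0:ℝ) (1/6)) : 0 < Zf p := by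
  have hanti : StrictAntiOn Zf (Ioc (0:ℝ) (1/6)) := by
    apply strictAntiOn_of_deriv_neg (convex_Ioc _ _)
    · intro x hx
      have hx2 : (0:ℝ) < 1 - 2*x := by have := hx.2; linarith
      exact (Zf_hasDerivAt hx.1 hx2).continuousAt.continuousWithinAt
    · intro x hx
      rw [interior_Ioc] at hx
      have hx2 : (0:ℝ) < 1 - 2*x := by have := hx.2; linarith
      rw [(Zf_hasDerivAt hx.1 hx2).deriv]
      have hden : (0:ℝ) < (x*(1-2*x))^2 := pow_pos (mul_pos hx.1 hx2) 2
      have hx0' : x ≠ 0 := ne_of_gt hx.1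
      have hx2' : (1:ℝ) - 2*x ≠ 0 := ne_of_gt hx2
      have key : (-3*(x*(1-2*x)) - (1-3*x)*(1-4*x))/(x*(1-2*x))^2 + 3*(2/(1-2*x) + 1/x)
          = -((1-3*x)*(1-4*x))/(x*(1-2*x))^2 := by
        rw [eq_div_iff (pow_ne_zero 2 (mul_ne_zero hx0' hx2')), add_mul,
          div_mul_cancel₀ _ (pow_ne_zero 2 (mul_ne_zero hx0' hx2'))]
        have h1 : 2/(1-2*x) * (1-2*x) = 2 := div_mul_cancel₀ _ hx2'
        have h2 : 1/x * x = 1 := div_mul_cancel₀ _ hx0'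
        linear_combination (3*x^2*(1-2*x)) * h1 + (3*x*(1-2*x)^2) * h2
      rw [key]
      apply div_neg_of_neg_of_pos _ hden
      have h1 : (0:ℝ) < 1-3*x := by have := hx.2; linarith
      have h2 : (0:ℝ) < 1-4*x := by have := hx.2; linarith
      nlinarith
  have h6 : Zf (1/6) > 0 := by
    have e1 : ((1:ℝ)-2*(1/6)) = 2/3 := by norm_num
    have e2 : Real.log (2/3) - Real.log (1/6) = 2 * Real.log 2 := by
      rw [show (2:ℝ)/3 = (1/6)*4 by norm_num, Real.log_mul (by norm_num) (by norm_num),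
        show (4:ℝ) = 2^2 by norm_num, Real.log_pow]
      push_cast; ring
    rw [Zf, e1, e2]
    have := Real.log_two_lt_d9
    norm_num
    nlinarith [Real.log_two_lt_d9]
  have := hanti (mem_Ioc.2 ⟨hp.1, le_of_lt hp.2⟩) (mem_Ioc.2 ⟨by norm_num, le_refl _⟩) hp.2
  linarith

lemma Xif_strictAntiOn : StrictAntiOn Xif (Ioo (0:ℝ) (1/6)) := by
  apply strictAntiOn_of_deriv_neg (convex_Ioo _ _)
  · intro x hx
    have hx2 : (1:ℝ) - 2*x ≠ 0 := by have := hx.2; intro h; nlinarith [hx.2]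
    have hx3 : (1:ℝ) - 3*x ≠ 0 := by have := hx.2; intro h; nlinarith [hx.2]
    have hN := (log_one_sub_two_hasDerivAt hx2).sub (Real.hasDerivAt_log (ne_of_gt hx.1))
    have hD : HasDerivAt (fun p : ℝ => 1-3*p) (-3) x := by
      simpa using ((hasDerivAt_id x).const_mul (3:ℝ)).const_sub 1
    exact ((hN.div hD hx3)).continuousAt.continuousWithinAt
  · intro x hx
    rw [interior_Ioo] at hx
    have hx0 : 0 < x := hx.1
    have hx2 : (0:ℝ) < 1 - 2*x := by have := hx.2; linarith
    have hx3 : (0:ℝ) < 1 - 3*x := by have := hx.2; linarith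
    have hN := (log_one_sub_two_hasDerivAt (ne_of_gt hx2)).sub (Real.hasDerivAt_log (ne_of_gt hx0))
    have hD : HasDerivAt (fun p : ℝ => 1-3*p) (-3) x := by
      simpa using ((hasDerivAt_id x).const_mul (3:ℝ)).const_sub 1
    have hdiv := hN.div hD (ne_of_gt hx3)
    have : deriv Xif x = ((-2/(1-2*x) - x⁻¹)*(1-3*x) - (Real.log (1-2*x) - Real.log x)*(-3))/(1-3*x)^2 := by
      have : Xif = fun p : ℝ => (Real.log (1-2*p) - Real.log p)/(1-3*p) := rfl
      rw [this]
      exact hdiv.deriv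
    rw [this]
    apply div_neg_of_neg_of_pos _ (pow_pos hx3 2)
    have hZ := Zf_pos hx
    rw [Zf] at hZ
    have hkey : 3*(Real.log (1-2*x) - Real.log x) < (1-3*x)/(x*(1-2*x)) := by linarith
    have he : (-2/(1-2*x) - x⁻¹)*(1-3*x) = -((1-3*x)/(x*(1-2*x))) := by
      field_simp
      ring
    rw [he]
    nlinarith [hkey]


noncomputable def Efun (T a b : ℝ) : ℝ := hfun T a + hfun T b + hfun T (1-a-b)

def KK : Set (ℝ × ℝ) := {q | 0 ≤ q.1 ∧ 0 ≤ q.2 ∧ q.1 + q.2 ≤ 1}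

lemma KK_isClosed : IsClosed KK := by
  have h1 : IsClosed {q : ℝ × ℝ | 0 ≤ q.1} := isClosed_le continuous_const continuous_fst
  have h2 : IsClosed {q : ℝ × ℝ | 0 ≤ q.2} := isClosed_le continuous_const continuous_snd
  have h3 : IsClosed {q : ℝ × ℝ | q.1 + q.2 ≤ 1} :=
    isClosed_le (continuous_fst.add continuous_snd) continuous_const
  have : KK = ({q : ℝ × ℝ | 0 ≤ q.1} ∩ {q : ℝ × ℝ | 0 ≤ q.2}) ∩ {q : ℝ × ℝ | q.1 + q.2 ≤ 1} := by
    ext q; simp [KK, and_assoc]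
  rw [this]
  exact (h1.inter h2).inter h3

lemma KK_compact : IsCompact KK := by
  apply IsCompact.of_isClosed_subset (isCompact_Icc (a := ((0:ℝ),(0:ℝ))) (b := ((1:ℝ),(1:ℝ)))) KK_isClosed
  intro q hq
  obtain ⟨h1, h2, h3⟩ := hq
  simp only [mem_Icc, Prod.le_def]
  constructor
  · exact ⟨h1, h2⟩
  · constructor <;> [linarith; linarith]

lemma Efun_continuous (T : ℝ) : Continuous (fun q : ℝ × ℝ => Efun T q.1 q.2) := by
  unfold Efun
  have cf : Continuous (fun q : ℝ × ℝ => q.1) := continuous_fst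
  have cs : Continuous (fun q : ℝ × ℝ => q.2) := continuous_snd
  have h3 : Continuous (fun q : ℝ × ℝ => 1 - q.1 - q.2) :=
    (continuous_const.sub cf).sub cs
  exact (((hfun_continuous T).comp cf).add ((hfun_continuous T).comp cs)).add
    ((hfun_continuous T).comp h3)

lemma hfun_zero (T : ℝ) : hfun T 0 = 0 := by simp [hfun]

/-- Boundary descent: splitting off a small ε from a positive mass strictly decreases h-sum. -/
lemma boundary_descent {T : ℝ} (hT : 0 < T) {b : ℝ} (hb0 : 0 < b) (hb1 : b ≤ 1) :
    ∃ ε : ℝ, 0 < ε ∧ ε ≤ b/2 ∧ hfun T ε + hfun T (b-ε) < hfun T b := by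
  set M : ℝ := 1 + T + T * Real.log (2/b) with hM
  have hlog2b : 0 ≤ Real.log (2/b) := by
    apply Real.log_nonneg
    rw [le_div_iff₀ hb0]; linarith
  have hM0 : 0 < M := by positivity
  set ε : ℝ := min (b/2) (Real.exp (-(M/T) - 1)) with hε
  have hε0 : 0 < ε := lt_min (by linarith) (Real.exp_pos _)
  have hεb2 : ε ≤ b/2 := min_le_left _ _
  refine ⟨ε, hε0, hεb2, ?_⟩
  -- derivative bound on [b/2, b]
  have hderiv : ∀ x ∈ Icc (b/2) b, HasDerivWithinAt (hfun T) (hd T x) (Icc (b/2) b) x := by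
    intro x hx
    have hx0 : 0 < x := lt_of_lt_of_le (by linarith) hx.1
    exact (hfun_hasDerivAt (ne_of_gt hx0)).hasDerivWithinAt
  have hbound : ∀ x ∈ Icc (b/2) b, ‖hd T x‖ ≤ M := by
    intro x hx
    have hx0 : 0 < x := lt_of_lt_of_le (by linarith) hx.1
    have hx1 : x ≤ 1 := le_trans hx.2 hb1
    have hlx_le : Real.log x ≤ 0 := Real.log_nonpos (le_of_lt hx0) hx1
    have hlx_ge : Real.log (b/2) ≤ Real.log x := Real.log_le_log (by linarith) hx.1
    have hlb : Real.log (2/b) = - Real.log (b/2) := by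
      rw [show (2:ℝ)/b = (b/2)⁻¹ by field_simp, Real.log_inv]
    have habs : |Real.log x| ≤ Real.log (2/b) := by
      rw [abs_of_nonpos hlx_le, hlb]; linarith
    rw [Real.norm_eq_abs, hd]
    calc |(-x) + T * Real.log x + T| ≤ |(-x)| + |T * Real.log x| + |T| := by
          exact (abs_add_le _ _).trans (by gcongr; exact abs_add_le _ _)
      _ ≤ 1 + T * Real.log (2/b) + T := by
          rw [abs_neg, abs_of_nonneg (le_of_lt hT), abs_mul, abs_of_nonneg (le_of_lt hT)]
          have : |x| ≤ 1 := by rw [abs_of_nonneg (le_of_lt hx0)]; exact hx1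
          have := mul_le_mul_of_nonneg_left habs (le_of_lt hT)
          linarith
      _ = M := by rw [hM]; ring
  have hmvt := Convex.norm_image_sub_le_of_norm_hasDerivWithin_le hderiv hbound (convex_Icc _ _)
    (show b ∈ Icc (b/2) b from ⟨by linarith, le_refl b⟩)
    (show b - ε ∈ Icc (b/2) b from ⟨by linarith, by linarith⟩)
  rw [Real.norm_eq_abs, Real.norm_eq_abs] at hmvt
  have h2 : hfun T (b-ε) - hfun T b ≤ M * ε := by
    have habs : |b - ε - b| = ε := by rw [show b - ε - b = -ε by ring, abs_neg, abs_of_pos hε0]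
    rw [habs] at hmvt
    calc hfun T (b-ε) - hfun T b ≤ |hfun T (b-ε) - hfun T b| := le_abs_self _
      _ ≤ M * ε := hmvt
  have h1 : hfun T ε ≤ T * (ε * Real.log ε) := by
    rw [hfun]
    nlinarith [sq_nonneg ε]
  have hlogε : Real.log ε ≤ -(M/T) - 1 := by
    calc Real.log ε ≤ Real.log (Real.exp (-(M/T) - 1)) :=
          Real.log_le_log hε0 (min_le_right _ _)
      _ = -(M/T) - 1 := Real.log_exp _
  have h3 : T * (ε * Real.log ε) + M * ε < 0 := by
    have : T * Real.log ε ≤ -M - T := by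
      have := mul_le_mul_of_nonneg_left hlogε (le_of_lt hT)
      calc T * Real.log ε ≤ T * (-(M/T) - 1) := this
        _ = -M - T := by field_simp
    nlinarith [hε0, hT]
  linarith

lemma Efun_comm (T a b : ℝ) : Efun T a b = Efun T b a := by
  rw [Efun, Efun, show 1-a-b = 1-b-a by ring]; ring

lemma min_interior {T : ℝ} (hT : 0 < T) {a b : ℝ} (hmem : (a,b) ∈ KK)
    (hmin : IsMinOn (fun q : ℝ × ℝ => Efun T q.1 q.2) KK (a,b)) :
    0 < a ∧ 0 < b ∧ a + b < 1 := by
  obtain ⟨ha, hb, hab⟩ := hmem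
  simp only at ha hb hab
  -- a = 0 leads to contradiction (given the swap trick for b)
  have key : ∀ a' b' : ℝ, (a',b') ∈ KK →
      IsMinOn (fun q : ℝ × ℝ => Efun T q.1 q.2) KK (a',b') → 0 < a' := by
    intro a' b' hmem' hmin'
    rw [isMinOn_iff] at hmin'
    obtain ⟨ha', hb', hab'⟩ := hmem'
    simp only at ha' hb' hab'
    rcases lt_or_eq_of_le ha' with h | h
    · exact h
    exfalso
    rcases lt_or_eq_of_le hb' with hb0 | hb0
    · -- a' = 0, b' > 0 : competitor (ε, b'-ε)
      obtain ⟨ε, hε0, hε2, hlt⟩ := boundary_descent hT hb0 (by linarith)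
      have hq : ((ε, b'-ε) : ℝ × ℝ) ∈ KK := ⟨le_of_lt hε0, by simp; linarith, by simp; linarith⟩
      have := hmin' _ hq
      simp only at this
      simp only [Efun] at this
      rw [show (1:ℝ)-ε-(b'-ε) = 1-a'-b' by rw [← h]; ring] at this
      rw [← h, hfun_zero] at this
      linarith
    · -- a' = 0, b' = 0 : competitor (ε, 0)
      obtain ⟨ε, hε0, hε2, hlt⟩ := boundary_descent hT (show (0:ℝ) < 1 by norm_num) (le_refl 1)
      have hq : ((ε, 0) : ℝ × ℝ) ∈ KK := ⟨le_of_lt hε0, le_refl 0, by simp; linarith⟩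
      have := hmin' _ hq
      simp only at this
      simp only [Efun] at this
      rw [← h, ← hb0] at this
      rw [hfun_zero] at this
      rw [show (1:ℝ)-0-0 = 1 by ring, show (1:ℝ)-ε-0 = 1-ε by ring] at this
      linarith
  have ha0 : 0 < a := key a b ⟨ha, hb, hab⟩ hmin
  -- swap to get b > 0
  have hminswap : IsMinOn (fun q : ℝ × ℝ => Efun T q.1 q.2) KK (b,a) := by
    rw [isMinOn_iff]
    intro q hq
    have hq' : ((q.2, q.1) : ℝ × ℝ) ∈ KK := ⟨hq.2.1, hq.1, by have := hq.2.2; linarith⟩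
    have := isMinOn_iff.mp hmin _ hq'
    simp only at this ⊢
    calc Efun T b a = Efun T a b := Efun_comm T b a
      _ ≤ Efun T q.2 q.1 := this
      _ = Efun T q.1 q.2 := Efun_comm T q.2 q.1
  have hb0 : 0 < b := key b a ⟨hb, ha, by linarith⟩ hminswap
  refine ⟨ha0, hb0, ?_⟩
  rcases lt_or_eq_of_le hab with h | h
  · exact h
  exfalso
  -- a + b = 1 : competitor (a-ε, b)
  obtain ⟨ε, hε0, hε2, hlt⟩ := boundary_descent hT ha0 (by linarith)
  have hq : ((a-ε, b) : ℝ × ℝ) ∈ KK := ⟨by simp; linarith, le_of_lt hb0, by simp; linarith⟩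
  have := isMinOn_iff.mp hmin _ hq
  simp only at this
  simp only [Efun] at this
  rw [show (1:ℝ)-(a-ε)-b = ε by rw [show (1:ℝ) = a + b from h.symm]; ring,
    show (1:ℝ)-a-b = 0 by rw [show (1:ℝ) = a + b from h.symm]; ring, hfun_zero] at this
  linarith

lemma min_foc {T : ℝ} {a b : ℝ} (ha : 0 < a) (hb : 0 < b) (hab : a + b < 1)
    (hmin : IsMinOn (fun q : ℝ × ℝ => Efun T q.1 q.2) KK (a,b)) :
    hd T a = hd T (1-a-b) ∧ hd T b = hd T (1-a-b) := by
  set c : ℝ := 1-a-b with hc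
  have hc0 : 0 < c := by rw [hc]; linarith
  have key : ∀ a' b' : ℝ, 0 < a' → 0 < b' → a' + b' < 1 →
      IsMinOn (fun q : ℝ × ℝ => Efun T q.1 q.2) KK (a',b') →
      hd T a' = hd T (1-a'-b') := by
    intro a' b' ha' hb' hab' hmin'
    rw [isMinOn_iff] at hmin'
    set c' : ℝ := 1-a'-b' with hc'
    have hc'0 : 0 < c' := by rw [hc']; linarith
    have hloc : IsLocalMin (fun t : ℝ => Efun T (a'+t) b') 0 := by
      have hnb : Ioo (-(min a' c')) (min a' c') ∈ nhds (0:ℝ) :=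
        Ioo_mem_nhds (by simp [ha', hc'0]) (by simp [ha', hc'0])
      filter_upwards [hnb] with t ht
      have htm := ht.1
      have htM := ht.2
      have h1 : -(a') < t := by have := min_le_left a' c'; linarith
      have h2 : t < c' := lt_of_lt_of_le htM (min_le_right _ _)
      have hq : ((a'+t, b') : ℝ × ℝ) ∈ KK :=
        ⟨by simp; linarith, le_of_lt hb', by simp; rw [hc'] at h2; linarith⟩
      have := hmin' _ hq
      simp only at this
      simpa using this
    have hderiv : HasDerivAt (fun t : ℝ => Efun T (a'+t) b') (hd T a' - hd T c') 0 := by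
      have i1 : HasDerivAt (fun t : ℝ => a' + t) 1 0 := by
        simpa using (hasDerivAt_id (0:ℝ)).const_add a'
      have o1 : HasDerivAt (fun t : ℝ => hfun T (a'+t)) (hd T a') 0 := by
        have hne : a' + (0:ℝ) ≠ 0 := by simpa using ne_of_gt ha'
        have := HasDerivAt.comp (x := (0:ℝ)) (hfun_hasDerivAt (T := T) (t := a'+0) hne) i1
        simpa [Function.comp_def] using this
      have i3 : HasDerivAt (fun t : ℝ => 1-(a'+t)-b') (-1) 0 := by
        have := (i1.const_sub 1).sub_const b'
        convert this using 1
      have o3 : HasDerivAt (fun t : ℝ => hfun T (1-(a'+t)-b')) (hd T c' * (-1)) 0 := by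
        have hne : (1:ℝ)-(a'+0)-b' ≠ 0 := by
          simpa using ne_of_gt hc'0
        have := HasDerivAt.comp (x := (0:ℝ)) (hfun_hasDerivAt (T := T) (t := 1-(a'+0)-b') hne) i3
        have e : (1:ℝ)-(a'+0)-b' = c' := by rw [hc']; ring
        rw [e] at this
        simpa [Function.comp_def] using this
      have hsum := (o1.add_const (hfun T b')).add o3
      have e2 : hd T a' + hd T c' * (-1) = hd T a' - hd T c' := by ring
      rw [e2] at hsum
      exact hsum
    have h0 := hloc.deriv_eq_zero
    rw [hderiv.deriv] at h0
    linarith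
  have h1 := key a b ha hb hab hmin
  have hminswap : IsMinOn (fun q : ℝ × ℝ => Efun T q.1 q.2) KK (b,a) := by
    rw [isMinOn_iff]
    intro q hq
    have hq' : ((q.2, q.1) : ℝ × ℝ) ∈ KK := ⟨hq.2.1, hq.1, by have := hq.2.2; linarith⟩
    have := isMinOn_iff.mp hmin _ hq'
    simp only at this ⊢
    calc Efun T b a = Efun T a b := Efun_comm T b a
      _ ≤ Efun T q.2 q.1 := this
      _ = Efun T q.1 q.2 := Efun_comm T q.2 q.1
  have h2 := key b a hb ha (by linarith) hminswap
  rw [show 1-b-a = 1-a-b by ring] at h2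
  exact ⟨h1, h2⟩

lemma concav_mid {T : ℝ} (hT : 0 < T) {x t : ℝ} (hx : T < x) (ht : 0 < t) (hxt : T ≤ x - t) :
    hfun T (x+t) + hfun T (x-t) < 2 * hfun T x := by
  have hcc := hfun_strictConcaveOn hT
  have h1 : x - t ∈ Ici T := hxt
  have h2 : x + t ∈ Ici T := by simp only [mem_Ici]; linarith
  have hne : x - t ≠ x + t := by intro h; linarith [h]
  have h3 := hcc.2 h1 h2 hne (by norm_num : (0:ℝ) < 1/2) (by norm_num : (0:ℝ) < 1/2)
    (by norm_num : (1:ℝ)/2 + 1/2 = 1)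
  simp only [smul_eq_mul] at h3
  rw [show (1:ℝ)/2 * (x-t) + 1/2 * (x+t) = x by ring] at h3
  linarith

lemma no_eq_pair {T a b : ℝ} (hT : 0 < T) (ha : 0 < a) (hb : 0 < b) (hab : a+b < 1)
    (hmin : IsMinOn (fun q : ℝ × ℝ => Efun T q.1 q.2) KK (a,b)) :
    ¬(a = b ∧ T < a) ∧ ¬(a = 1-a-b ∧ T < a) ∧ ¬(b = 1-a-b ∧ T < b) := by
  rw [isMinOn_iff] at hmin
  refine ⟨?_, ?_, ?_⟩
  · rintro ⟨hab2, hTa⟩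
    set t : ℝ := (a-T)/2 with htdef
    have ht0 : 0 < t := by rw [htdef]; linarith
    have htle : T ≤ a - t := by rw [htdef]; linarith
    have hq : ((a+t, b-t) : ℝ × ℝ) ∈ KK :=
      ⟨by simp; linarith, by simp; rw [← hab2]; linarith, by simp; linarith⟩
    have hcm := concav_mid hT hTa ht0 htle
    have := hmin _ hq
    simp only [Efun] at this
    rw [show (1:ℝ)-(a+t)-(b-t) = 1-a-b by ring] at this
    rw [← hab2] at this
    linarith
  · rintro ⟨hac, hTa⟩
    set t : ℝ := (a-T)/2 with htdef
    have ht0 : 0 < t := by rw [htdef]; linarith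
    have htle : T ≤ a - t := by rw [htdef]; linarith
    have hq : ((a+t, b) : ℝ × ℝ) ∈ KK :=
      ⟨by simp; linarith, le_of_lt hb, by simp; nlinarith [hac]⟩
    have hcm := concav_mid hT hTa ht0 htle
    have := hmin _ hq
    simp only [Efun] at this
    rw [show (1:ℝ)-(a+t)-b = a - t by rw [htdef]; nlinarith [hac]] at this
    rw [← hac] at this
    linarith
  · rintro ⟨hbc, hTb⟩
    set t : ℝ := (b-T)/2 with htdef
    have ht0 : 0 < t := by rw [htdef]; linarith
    have htle : T ≤ b - t := by rw [htdef]; linarith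
    have hq : ((a, b+t) : ℝ × ℝ) ∈ KK :=
      ⟨le_of_lt ha, by simp; linarith, by simp; nlinarith [hbc]⟩
    have hcm := concav_mid hT hTb ht0 htle
    have := hmin _ hq
    simp only [Efun] at this
    rw [show (1:ℝ)-a-(b+t) = b - t by rw [htdef]; nlinarith [hbc]] at this
    rw [← hbc] at this
    linarith

lemma p_eq_u {T β u p : ℝ} (hβ : 3 < β) (hTβ : T = 1/β) (hu0 : 0 < u) (hu3 : u < 1/3)
    (hlog : Real.log (1-2*u) - Real.log u = β*(1-3*u))
    (hp0 : 0 < p) (hpT : p < T) (hpd : hd T p = hd T (1-2*p)) : p = u := by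
  have hβ0 : 0 < β := by linarith
  have hT3 : T < 1/3 := by rw [hTβ]; rw [div_lt_iff₀ hβ0]; linarith
  have hp3 : p < 1/3 := lt_trans hpT hT3
  have hplog : Real.log (1-2*p) - Real.log p = β*(1-3*p) := by
    rw [hd, hd] at hpd
    have h1 : T * (Real.log (1-2*p) - Real.log p) = 1-3*p := by linarith
    rw [hTβ] at h1
    field_simp at h1
    linarith
  have hp6 : p < 1/6 := by
    apply lt_sixth_of_xi_gt_three ⟨hp0, hp3⟩
    rw [hplog]
    have : (0:ℝ) < 1-3*p := by linarith
    nlinarith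
  have hu6 : u < 1/6 := by
    apply lt_sixth_of_xi_gt_three ⟨hu0, hu3⟩
    rw [hlog]
    have : (0:ℝ) < 1-3*u := by linarith
    nlinarith
  have hXp : Xif p = β := by
    rw [Xif, hplog]
    exact mul_div_cancel_right₀ β (by intro h; rw [show p = 1/3 by linarith] at hp6; norm_num at hp6)
  have hXu : Xif u = β := by
    rw [Xif, hlog]
    exact mul_div_cancel_right₀ β (by intro h; rw [show u = 1/3 by linarith] at hu6; norm_num at hu6)
  exact Xif_strictAntiOn.injOn ⟨hp0, hp6⟩ ⟨hu0, hu6⟩ (by rw [hXp, hXu])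

lemma min_classify {T β u : ℝ} (hβ : 3 < β) (hTβ : T = 1/β) (hu0 : 0 < u) (hu3 : u < 1/3)
    (hlog : Real.log (1-2*u) - Real.log u = β*(1-3*u))
    {a b : ℝ} (ha : 0 < a) (hb : 0 < b) (hab : a + b < 1)
    (hmin : IsMinOn (fun q : ℝ × ℝ => Efun T q.1 q.2) KK (a,b)) :
    (a = u ∧ b = u) ∨ (a = u ∧ b = 1-2*u) ∨ (a = 1-2*u ∧ b = u) := by
  have hβ0 : 0 < β := by linarith
  have hT : 0 < T := by rw [hTβ]; positivity
  have hT3 : T < 1/3 := by rw [hTβ]; rw [div_lt_iff₀ hβ0]; linarith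
  set c : ℝ := 1-a-b with hcdef
  have hc : 0 < c := by rw [hcdef]; linarith
  obtain ⟨hfa, hfb⟩ := min_foc ha hb hab hmin
  rw [← hcdef] at hfa hfb
  have hfab : hd T a = hd T b := hfa.trans hfb.symm
  obtain ⟨hp1, hp2, hp3⟩ := no_eq_pair hT ha hb hab hmin
  rw [← hcdef] at hp2 hp3
  have hmax : ∀ y : ℝ, 0 < y → y ≠ T → hd T y < hd T T := by
    intro y hy hyT
    rcases lt_or_gt_of_ne hyT with h | h
    · exact hd_strictMonoOn hT ⟨hy, le_of_lt h⟩ ⟨hT, le_refl T⟩ h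
    · exact hd_strictAntiOn hT (mem_Ici.2 (le_refl T)) (mem_Ici.2 (le_of_lt h)) h
  have hkeyT : ∀ x y z : ℝ, 0<x → 0<y → 0<z → x+y+z=1 →
      hd T x = hd T y → hd T x = hd T z → x ≠ T := by
    intro x y z hx hy hz hsum hxy hxz hxT
    have hTx : hd T x = hd T T := by rw [hxT]
    have hyT : y = T := by
      by_contra hyT
      have := hmax y hy hyT
      rw [← hTx, ← hxy] at this
      exact lt_irrefl _ this
    have hzT : z = T := by
      by_contra hzT
      have := hmax z hz hzT
      rw [← hTx, ← hxz] at this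
      exact lt_irrefl _ this
    rw [hxT, hyT, hzT] at hsum
    linarith
  have habc : a + b + c = 1 := by rw [hcdef]; ring
  have haT : a ≠ T := hkeyT a b c ha hb hc habc hfab hfa
  have hbT : b ≠ T := hkeyT b a c hb ha hc (by linarith) hfab.symm hfb
  have hcT : c ≠ T := hkeyT c a b hc ha hb (by linarith) hfa.symm hfb.symm
  have hsame : ∀ x y : ℝ, 0<x → 0<y → hd T x = hd T y →
      ((x<T ∧ y<T) ∨ (T<x ∧ T<y)) → x = y := by
    intro x y hx hy hxy hcase
    rcases hcase with ⟨h1, h2⟩ | ⟨h1, h2⟩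
    · exact (hd_strictMonoOn hT).injOn ⟨hx, le_of_lt h1⟩ ⟨hy, le_of_lt h2⟩ hxy
    · exact (hd_strictAntiOn hT).injOn (mem_Ici.2 (le_of_lt h1)) (mem_Ici.2 (le_of_lt h2)) hxy
  rcases lt_or_gt_of_ne haT with haT' | haT' <;>
    rcases lt_or_gt_of_ne hbT with hbT' | hbT' <;>
      rcases lt_or_gt_of_ne hcT with hcT' | hcT'
  · -- all < T : all equal, = 1/3 > T, contradiction
    exfalso
    have e1 : a = b := hsame a b ha hb hfab (Or.inl ⟨haT', hbT'⟩)
    have e2 : a = c := hsame a c ha hc hfa (Or.inl ⟨haT', hcT'⟩)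
    rw [← e1, ← e2] at habc
    have : a = 1/3 := by linarith
    linarith
  · -- a,b < T, c > T : a = b, c = 1-2a
    have e1 : a = b := hsame a b ha hb hfab (Or.inl ⟨haT', hbT'⟩)
    have hpu : a = u := by
      apply p_eq_u hβ hTβ hu0 hu3 hlog ha haT'
      rw [show 1-2*a = c by rw [hcdef, ← e1]; ring]
      exact hfa
    exact Or.inl ⟨hpu, by rw [← e1]; exact hpu⟩
  · -- a,c < T, b > T : a = c, b = 1-2a
    have e1 : a = c := hsame a c ha hc hfa (Or.inl ⟨haT', hcT'⟩)
    have hpu : a = u := by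
      apply p_eq_u hβ hTβ hu0 hu3 hlog ha haT'
      rw [show 1-2*a = b by rw [hcdef] at e1; linarith]
      exact hfab
    refine Or.inr (Or.inl ⟨hpu, ?_⟩)
    rw [← hpu, show 1-2*a = b by rw [hcdef] at e1; linarith]
  · -- a < T, b,c > T : b = c contradiction
    exfalso
    exact hp3 ⟨hsame b c hb hc hfb (Or.inr ⟨hbT', hcT'⟩), hbT'⟩
  · -- b,c < T, a > T : b = c, a = 1-2b
    have e1 : b = c := hsame b c hb hc hfb (Or.inl ⟨hbT', hcT'⟩)
    have hpu : b = u := by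
      apply p_eq_u hβ hTβ hu0 hu3 hlog hb hbT'
      rw [show 1-2*b = a by rw [hcdef] at e1; linarith]
      exact hfab.symm
    refine Or.inr (Or.inr ⟨?_, hpu⟩)
    rw [← hpu, show 1-2*b = a by rw [hcdef] at e1; linarith]
  · -- b < T, a,c > T : a = c contradiction
    exfalso
    exact hp2 ⟨hsame a c ha hc hfa (Or.inr ⟨haT', hcT'⟩), haT'⟩
  · -- c < T, a,b > T : a = b contradiction
    exfalso
    exact hp1 ⟨hsame a b ha hb hfab (Or.inr ⟨haT', hbT'⟩), haT'⟩
  · -- all > T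
    exfalso
    exact hp1 ⟨hsame a b ha hb hfab (Or.inr ⟨haT', hbT'⟩), haT'⟩

lemma Efun_val_uv {T u : ℝ} : Efun T u (1-2*u) = Efun T u u ∧ Efun T (1-2*u) u = Efun T u u := by
  constructor
  · rw [Efun, Efun, show (1:ℝ)-u-(1-2*u) = u by ring, show (1:ℝ)-u-u = 1-2*u by ring]; ring
  · rw [Efun, Efun, show (1:ℝ)-(1-2*u)-u = u by ring, show (1:ℝ)-u-u = 1-2*u by ring]; ring

lemma core {T β u : ℝ} (hβ : 3 < β) (hTβ : T = 1/β) (hu0 : 0 < u) (hu3 : u < 1/3)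
    (hlog : Real.log (1-2*u) - Real.log u = β*(1-3*u)) :
    (∀ a b : ℝ, 0 < a → 0 < b → a + b < 1 → Efun T u u ≤ Efun T a b) ∧
    (∀ a b : ℝ, 0 < a → 0 < b → a + b < 1 → Efun T a b = Efun T u u →
       (a = u ∧ b = u) ∨ (a = u ∧ b = 1-2*u) ∨ (a = 1-2*u ∧ b = u)) := by
  have hβ0 : 0 < β := by linarith
  have hT : 0 < T := by rw [hTβ]; positivity
  obtain ⟨m, hmK, hmin⟩ := KK_compact.exists_isMinOn ⟨((0:ℝ),(0:ℝ)), by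
      refine ⟨le_refl 0, le_refl 0, by norm_num⟩⟩ (Efun_continuous T).continuousOn
  rcases m with ⟨a0, b0⟩
  obtain ⟨ha0, hb0, hab0⟩ := min_interior hT hmK hmin
  have hval : Efun T a0 b0 = Efun T u u := by
    rcases min_classify hβ hTβ hu0 hu3 hlog ha0 hb0 hab0 hmin with ⟨h1, h2⟩ | ⟨h1, h2⟩ | ⟨h1, h2⟩
    · rw [h1, h2]
    · rw [h1, h2]; exact Efun_val_uv.1
    · rw [h1, h2]; exact Efun_val_uv.2
  have hglob : ∀ a b : ℝ, 0 < a → 0 < b → a + b < 1 → Efun T u u ≤ Efun T a b := by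
    intro a b ha hb hab
    have hq : ((a, b) : ℝ × ℝ) ∈ KK := ⟨le_of_lt ha, le_of_lt hb, le_of_lt hab⟩
    have := isMinOn_iff.mp hmin _ hq
    simp only at this
    linarith [hval]
  refine ⟨hglob, ?_⟩
  intro a b ha hb hab heq
  have hmin' : IsMinOn (fun q : ℝ × ℝ => Efun T q.1 q.2) KK (a, b) := by
    rw [isMinOn_iff]
    intro q hq
    simp only
    have h1 : Efun T a b = Efun T a0 b0 := by rw [heq, hval]
    have h2 := isMinOn_iff.mp hmin _ hq
    simp only at h2
    linarith
  exact min_classify hβ hTβ hu0 hu3 hlog ha hb hab hmin'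

lemma tangent_bound {T : ℝ} (hT : 0 < T) (hT3 : T < 1/3) {t : ℝ} (ht : T < t) :
    hfun T t ≤ hfun T (1/3) + hd T (1/3) * (t - 1/3) := by
  set m : ℝ := hd T (1/3) with hm
  set ψ : ℝ → ℝ := fun s => hfun T (1/3) + m * (s - 1/3) - hfun T s with hψ
  have hψd : ∀ s : ℝ, 0 < s → HasDerivAt ψ (m - hd T s) s := by
    intro s hs
    have h1 : HasDerivAt (fun s : ℝ => hfun T (1/3) + m * (s - 1/3)) m s := by
      exact ((((hasDerivAt_id s).sub_const (1/3)).const_mul m).const_add (hfun T (1/3))).congr_deriv (by ring)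
    exact h1.sub (hfun_hasDerivAt (ne_of_gt hs))
  have hψ13 : ψ (1/3) = 0 := by simp [hψ]
  have hanti := hd_strictAntiOn hT
  rcases le_or_gt t (1/3) with hcase | hcase
  · have hmono : AntitoneOn ψ (Icc T (1/3)) := by
      apply antitoneOn_of_deriv_nonpos (convex_Icc _ _)
      · intro s hs
        exact (hψd s (lt_of_lt_of_le hT hs.1)).continuousAt.continuousWithinAt
      · intro s hs
        rw [interior_Icc] at hs
        exact (hψd s (lt_trans hT hs.1)).differentiableAt.differentiableWithinAt
      · intro s hs
        rw [interior_Icc] at hs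
        rw [(hψd s (lt_trans hT hs.1)).deriv]
        have := hanti (mem_Ici.2 (le_of_lt hs.1)) (mem_Ici.2 (le_of_lt hT3)) hs.2
        rw [← hm] at this
        linarith
    have := hmono (mem_Icc.2 ⟨le_of_lt ht, hcase⟩) (mem_Icc.2 ⟨le_of_lt hT3, le_refl _⟩) hcase
    rw [hψ13] at this
    simp only [hψ] at this
    linarith
  · have hmono : MonotoneOn ψ (Ici (1/3 : ℝ)) := by
      apply monotoneOn_of_deriv_nonneg (convex_Ici _)
      · intro s hs
        exact (hψd s (lt_of_lt_of_le (by norm_num) hs)).continuousAt.continuousWithinAt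
      · intro s hs
        rw [interior_Ici] at hs
        exact (hψd s (lt_trans (by norm_num) hs)).differentiableAt.differentiableWithinAt
      · intro s hs
        rw [interior_Ici] at hs
        rw [(hψd s (lt_trans (by norm_num) hs)).deriv]
        have := hanti (mem_Ici.2 (le_of_lt hT3)) (mem_Ici.2 (le_of_lt (lt_trans hT3 hs))) hs
        rw [← hm] at this
        linarith
    have := hmono (mem_Ici.2 (le_refl _)) (mem_Ici.2 (le_of_lt hcase)) (le_of_lt hcase)
    rw [hψ13] at this
    simp only [hψ] at this
    linarith

lemma Efun_tangent {T : ℝ} (hT : 0 < T) (hT3 : T < 1/3) {a b : ℝ}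
    (ha : T < a) (hb : T < b) (hc : T < 1-a-b) :
    Efun T a b ≤ Efun T (1/3) (1/3) := by
  have t1 := tangent_bound hT hT3 ha
  have t2 := tangent_bound hT hT3 hb
  have t3 := tangent_bound hT hT3 hc
  have hsum : hd T (1/3) * (a - 1/3) + hd T (1/3) * (b - 1/3) + hd T (1/3) * ((1-a-b) - 1/3) = 0 := by
    ring
  rw [Efun, Efun, show (1:ℝ)-1/3-1/3 = 1/3 by norm_num]
  linarith

lemma FE (β : ℝ) (x : Fin 4 → ℝ) :
    F3 β 0 x = Efun (1/β) (x 0) (x 1) + Efun (1/β) (x 2) (x 3) := by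
  simp only [F3, Efun, hfun]
  ring

lemma vec4_eta (p : Fin 4 → ℝ) : p = ![p 0, p 1, p 2, p 3] := by
  funext i; fin_cases i <;> rfl

/-- for β > 3 and x_s ∈ (0,1/3) with ξ(x_s) = β, the global minimizers
of F_{β,0} on D are exactly the nine points obtained by pairing the three permutations
(x_s, x_s), (x_s, 1−2x_s), (1−2x_s, x_s) in each component, and (1/3,1/3,1/3,1/3) is a
local maximum of F_{β,0}. -/
theorem stmt_8 (β : ℝ) (hβ : 3 < β)
    (xs : ℝ) (hxs : xs ∈ Ioo (0 : ℝ) (1 / 3)) (hξ : xi xs = β) :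
    {p | p ∈ D3 ∧ ∀ q ∈ D3, F3 β 0 p ≤ F3 β 0 q} =
      {p : Fin 4 → ℝ |
        ∃ a ∈ ({(xs, xs), (xs, 1 - 2 * xs), (1 - 2 * xs, xs)} : Set (ℝ × ℝ)),
        ∃ b ∈ ({(xs, xs), (xs, 1 - 2 * xs), (1 - 2 * xs, xs)} : Set (ℝ × ℝ)),
          p = ![a.1, a.2, b.1, b.2]} ∧
    {p | p ∈ D3 ∧ ∀ q ∈ D3, F3 β 0 p ≤ F3 β 0 q}.ncard = 9 ∧
    IsLocalMax (F3 β 0) ![1/3, 1/3, 1/3, 1/3] := by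
  obtain ⟨hxs0, hxs3⟩ := hxs
  have hβ0 : (0:ℝ) < β := by linarith
  have hv0 : (0:ℝ) < 1-2*xs := by linarith
  have hv3 : (1:ℝ)/3 < 1-2*xs := by linarith
  have huv : xs ≠ 1-2*xs := ne_of_lt (by linarith)
  have hvu : 1-2*xs ≠ xs := huv.symm
  have h13 : (0:ℝ) < 1-3*xs := by linarith
  have h13' : (1:ℝ)-3*xs ≠ 0 := ne_of_gt h13
  have hlog : Real.log (1-2*xs) - Real.log xs = β*(1-3*xs) := by
    rw [xi, if_neg (ne_of_lt hxs3)] at hξ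
    rw [show (1:ℝ) - 2 * xs = 1-2*xs from rfl, show (1:ℝ) - 3 * xs = 1-3*xs from rfl] at hξ
    rw [Real.log_div (by linarith) (ne_of_gt hxs0)] at hξ
    field_simp at hξ
    rw [show (1:ℝ) - 2*xs = 1 - xs*2 by ring]
    linarith
  have hcore := core (T := 1/β) hβ rfl hxs0 hxs3 hlog
  have hT : (0:ℝ) < 1/β := by positivity
  have hT3 : (1:ℝ)/β < 1/3 := by
    rw [div_lt_div_iff₀ hβ0 (by norm_num : (0:ℝ) < 3)]; linarith
  have hfacts : ∀ x y : ℝ,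
      ((x = xs ∧ y = xs) ∨ (x = xs ∧ y = 1-2*xs) ∨ (x = 1-2*xs ∧ y = xs)) →
      0 < x ∧ 0 < y ∧ x + y < 1 ∧ Efun (1/β) x y = Efun (1/β) xs xs := by
    rintro x y (⟨rfl, rfl⟩ | ⟨rfl, rfl⟩ | ⟨rfl, rfl⟩)
    · exact ⟨hxs0, hxs0, by linarith, rfl⟩
    · exact ⟨hxs0, hv0, by linarith, Efun_val_uv.1⟩
    · exact ⟨hv0, hxs0, by linarith, Efun_val_uv.2⟩
  have hchar : ∀ p : Fin 4 → ℝ, (p ∈ D3 ∧ ∀ q ∈ D3, F3 β 0 p ≤ F3 β 0 q) ↔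
      (((p 0 = xs ∧ p 1 = xs) ∨ (p 0 = xs ∧ p 1 = 1-2*xs) ∨ (p 0 = 1-2*xs ∧ p 1 = xs)) ∧
       ((p 2 = xs ∧ p 3 = xs) ∨ (p 2 = xs ∧ p 3 = 1-2*xs) ∨ (p 2 = 1-2*xs ∧ p 3 = xs))) := by
    intro p
    constructor
    · rintro ⟨hpD, hopt⟩
      obtain ⟨h0, h1, h2, h3, h01, h23⟩ := hpD
      have hxx : xs + xs < 1 := by linarith
      have hq1 : (![xs, xs, p 2, p 3]) ∈ D3 :=
        ⟨hxs0, hxs0, h2, h3, hxx, h23⟩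
      have hq2 : (![p 0, p 1, xs, xs]) ∈ D3 :=
        ⟨h0, h1, hxs0, hxs0, h01, hxx⟩
      have hle1 := hopt _ hq1
      have hle2 := hopt _ hq2
      rw [FE, FE] at hle1 hle2
      have hle1' : Efun (1/β) (p 0) (p 1) + Efun (1/β) (p 2) (p 3) ≤
          Efun (1/β) xs xs + Efun (1/β) (p 2) (p 3) := hle1
      have hle2' : Efun (1/β) (p 0) (p 1) + Efun (1/β) (p 2) (p 3) ≤
          Efun (1/β) (p 0) (p 1) + Efun (1/β) xs xs := hle2
      have hgl1 := hcore.1 (p 0) (p 1) h0 h1 h01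
      have hgl2 := hcore.1 (p 2) (p 3) h2 h3 h23
      have heq1 : Efun (1/β) (p 0) (p 1) = Efun (1/β) xs xs := le_antisymm (by linarith) hgl1
      have heq2 : Efun (1/β) (p 2) (p 3) = Efun (1/β) xs xs := le_antisymm (by linarith) hgl2
      exact ⟨hcore.2 (p 0) (p 1) h0 h1 h01 heq1, hcore.2 (p 2) (p 3) h2 h3 h23 heq2⟩
    · rintro ⟨hA, hB⟩
      obtain ⟨hA1, hA2, hA3, hA4⟩ := hfacts _ _ hA
      obtain ⟨hB1, hB2, hB3, hB4⟩ := hfacts _ _ hB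
      refine ⟨⟨hA1, hA2, hB1, hB2, hA3, hB3⟩, ?_⟩
      intro q hq
      obtain ⟨g0, g1, g2, g3, g01, g23⟩ := hq
      rw [FE, FE]
      have k1 := hcore.1 (q 0) (q 1) g0 g1 g01
      have k2 := hcore.1 (q 2) (q 3) g2 g3 g23
      rw [hA4, hB4]
      linarith
  refine ⟨?_, ?_, ?_⟩
  · ext p
    constructor
    · intro hp
      obtain ⟨hA, hB⟩ := (hchar p).1 hp
      refine ⟨(p 0, p 1), ?_, (p 2, p 3), ?_, vec4_eta p⟩
      · rcases hA with ⟨e1, e2⟩ | ⟨e1, e2⟩ | ⟨e1, e2⟩ <;> rw [e1, e2] <;> simp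
      · rcases hB with ⟨e1, e2⟩ | ⟨e1, e2⟩ | ⟨e1, e2⟩ <;> rw [e1, e2] <;> simp
    · rintro ⟨a, ha, b, hb, rfl⟩
      simp only [Set.mem_insert_iff, Set.mem_singleton_iff] at ha hb
      apply (hchar _).2
      constructor
      · rcases ha with rfl | rfl | rfl
        · exact Or.inl ⟨rfl, rfl⟩
        · exact Or.inr (Or.inl ⟨rfl, rfl⟩)
        · exact Or.inr (Or.inr ⟨rfl, rfl⟩)
      · rcases hb with rfl | rfl | rfl
        · exact Or.inl ⟨rfl, rfl⟩
        · exact Or.inr (Or.inl ⟨rfl, rfl⟩)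
        · exact Or.inr (Or.inr ⟨rfl, rfl⟩)
  · have hset : {p | p ∈ D3 ∧ ∀ q ∈ D3, F3 β 0 p ≤ F3 β 0 q} =
        ({![xs,xs,xs,xs], ![xs,xs,xs,1-2*xs], ![xs,xs,1-2*xs,xs],
          ![xs,1-2*xs,xs,xs], ![xs,1-2*xs,xs,1-2*xs], ![xs,1-2*xs,1-2*xs,xs],
          ![1-2*xs,xs,xs,xs], ![1-2*xs,xs,xs,1-2*xs], ![1-2*xs,xs,1-2*xs,xs]} :
          Set (Fin 4 → ℝ)) := by
      ext p
      constructor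
      · intro hp
        obtain ⟨hA, hB⟩ := (hchar p).1 hp
        have hp4 := vec4_eta p
        simp only [Set.mem_insert_iff, Set.mem_singleton_iff]
        rcases hA with ⟨e1, e2⟩ | ⟨e1, e2⟩ | ⟨e1, e2⟩ <;>
          rcases hB with ⟨f1, f2⟩ | ⟨f1, f2⟩ | ⟨f1, f2⟩ <;>
            rw [e1, e2, f1, f2] at hp4 <;> tauto
      · intro hp
        simp only [Set.mem_insert_iff, Set.mem_singleton_iff] at hp
        rcases hp with rfl | rfl | rfl | rfl | rfl | rfl | rfl | rfl | rfl <;>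
          exact (hchar _).2 ⟨by simp, by simp⟩
    rw [hset]
    have d0 : ∀ (w w' : Fin 4 → ℝ) (i : Fin 4), w i ≠ w' i → w ≠ w' :=
      fun w w' i h h' => h (congrFun h' i)
    rw [Set.ncard_insert_of_notMem (by
      simp only [Set.mem_insert_iff, Set.mem_singleton_iff]
      push_neg
      exact ⟨d0 _ _ 3 huv, d0 _ _ 2 huv, d0 _ _ 1 huv, d0 _ _ 1 huv, d0 _ _ 1 huv,
        d0 _ _ 0 huv, d0 _ _ 0 huv, d0 _ _ 0 huv⟩)]
    rw [Set.ncard_insert_of_notMem (by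
      simp only [Set.mem_insert_iff, Set.mem_singleton_iff]
      push_neg
      exact ⟨d0 _ _ 2 huv, d0 _ _ 1 huv, d0 _ _ 1 huv, d0 _ _ 1 huv,
        d0 _ _ 0 huv, d0 _ _ 0 huv, d0 _ _ 0 huv⟩)]
    rw [Set.ncard_insert_of_notMem (by
      simp only [Set.mem_insert_iff, Set.mem_singleton_iff]
      push_neg
      exact ⟨d0 _ _ 1 huv, d0 _ _ 1 huv, d0 _ _ 1 huv,
        d0 _ _ 0 huv, d0 _ _ 0 huv, d0 _ _ 0 huv⟩)]
    rw [Set.ncard_insert_of_notMem (by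
      simp only [Set.mem_insert_iff, Set.mem_singleton_iff]
      push_neg
      exact ⟨d0 _ _ 3 huv, d0 _ _ 2 huv, d0 _ _ 0 huv, d0 _ _ 0 huv, d0 _ _ 0 huv⟩)]
    rw [Set.ncard_insert_of_notMem (by
      simp only [Set.mem_insert_iff, Set.mem_singleton_iff]
      push_neg
      exact ⟨d0 _ _ 2 huv, d0 _ _ 0 huv, d0 _ _ 0 huv, d0 _ _ 0 huv⟩)]
    rw [Set.ncard_insert_of_notMem (by
      simp only [Set.mem_insert_iff, Set.mem_singleton_iff]
      push_neg
      exact ⟨d0 _ _ 0 huv, d0 _ _ 0 huv, d0 _ _ 0 huv⟩)]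
    rw [Set.ncard_insert_of_notMem (by
      simp only [Set.mem_insert_iff, Set.mem_singleton_iff]
      push_neg
      exact ⟨d0 _ _ 3 huv, d0 _ _ 2 huv⟩)]
    rw [Set.ncard_insert_of_notMem (by
      simp only [Set.mem_singleton_iff]
      exact d0 _ _ 2 huv)]
    rw [Set.ncard_singleton]
  · have hUopen : IsOpen {x : Fin 4 → ℝ | 1/β < x 0 ∧ 1/β < x 1 ∧ 1/β < 1 - x 0 - x 1 ∧
        1/β < x 2 ∧ 1/β < x 3 ∧ 1/β < 1 - x 2 - x 3} := by
      have c0 : Continuous (fun x : Fin 4 → ℝ => x 0) := continuous_apply 0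
      have c1 : Continuous (fun x : Fin 4 → ℝ => x 1) := continuous_apply 1
      have c2 : Continuous (fun x : Fin 4 → ℝ => x 2) := continuous_apply 2
      have c3 : Continuous (fun x : Fin 4 → ℝ => x 3) := continuous_apply 3
      exact (isOpen_lt continuous_const c0).and ((isOpen_lt continuous_const c1).and
        ((isOpen_lt continuous_const ((continuous_const.sub c0).sub c1)).and
        ((isOpen_lt continuous_const c2).and ((isOpen_lt continuous_const c3).and
        (isOpen_lt continuous_const ((continuous_const.sub c2).sub c3))))))
    have hcmem : (![1/3, 1/3, 1/3, 1/3] : Fin 4 → ℝ) ∈ {x : Fin 4 → ℝ | 1/β < x 0 ∧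
        1/β < x 1 ∧ 1/β < 1 - x 0 - x 1 ∧ 1/β < x 2 ∧ 1/β < x 3 ∧ 1/β < 1 - x 2 - x 3} := by
      refine ⟨hT3, hT3, ?_, hT3, hT3, ?_⟩ <;>
        · show (1:ℝ)/β < 1 - 1/3 - 1/3
          rw [show (1:ℝ) - 1/3 - 1/3 = 1/3 by norm_num]
          exact hT3
    apply Filter.eventually_of_mem (hUopen.mem_nhds hcmem)
    intro x hx
    obtain ⟨k0, k1, k2, k3, k4, k5⟩ := hx
    rw [FE, FE]
    have b1 := Efun_tangent hT hT3 k0 k1 k2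
    have b2 := Efun_tangent hT hT3 k3 k4 k5
    have hcv : Efun (1/β) ((![1/3,1/3,1/3,1/3] : Fin 4 → ℝ) 0) ((![1/3,1/3,1/3,1/3] : Fin 4 → ℝ) 1)
        + Efun (1/β) ((![1/3,1/3,1/3,1/3] : Fin 4 → ℝ) 2) ((![1/3,1/3,1/3,1/3] : Fin 4 → ℝ) 3)
        = Efun (1/β) (1/3) (1/3) + Efun (1/β) (1/3) (1/3) := rfl
    rw [hcv]
    exact add_le_add b1 b2
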